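/- arXiv:1705.07437 — 2 statements merged into one kernel-verified Lean document; each statement's English description precedes it below -/
import Mathlib

section
/- Let Q, R ⊆ 𝔽₂ⁿ. The set Q•R ⊆ 𝔽₂^{n+2} is powerful if and only if Q, R, and Q ∩ R are all powerful. -/
open Finset

/-- A finite set `S` of vectors in `𝔽₂ⁿ` is *powerful* if for every subset `X` of the
coordinate positions, the number of vectors in `S` that are zero at every position in `X`
is a power of 2. -/
def IsPowerful {n : ℕ} (S : Finset (Fin n → ZMod 2)) : Prop :=
  ∀ X : Finset (Fin n), ∃ d : ℕ, (S.filter (fun v => ∀ i ∈ X, v i = 0)).card = 2 ^ d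

/-- The combination `Q•R ⊆ 𝔽₂^{n+2}`:
`{v00 : v ∈ Q ∩ R} ∪ {v01 : v ∈ Q ∖ R} ∪ {v10 : v ∈ R ∖ Q} ∪ {v11 : v ∉ Q ∪ R}`. -/
def bulletComb {n : ℕ} (Q R : Finset (Fin n → ZMod 2)) : Finset (Fin (n + 2) → ZMod 2) :=
  ((Q ∩ R).image (fun v => Fin.append v ![0, 0])) ∪
  ((Q \ R).image (fun v => Fin.append v ![0, 1])) ∪
  ((R \ Q).image (fun v => Fin.append v ![1, 0])) ∪
  (((Q ∪ R)ᶜ).image (fun v => Fin.append v ![1, 1]))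

lemma append_inj {n : ℕ} (t : Fin 2 → ZMod 2) :
    Function.Injective (fun v : Fin n → ZMod 2 => Fin.append v t) := by
  intro v w h
  funext i
  have := congrFun h (Fin.castAdd 2 i)
  simpa [Fin.append_left] using this

lemma castAdd_ne_natAdd {n : ℕ} (i : Fin n) (j : Fin 2) :
    Fin.castAdd 2 i ≠ Fin.natAdd n j := by
  intro h
  have hi := i.isLt
  have := congrArg Fin.val h
  simp only [Fin.coe_castAdd, Fin.coe_natAdd] at this
  omega

lemma split_cond {n : ℕ} (v : Fin n → ZMod 2) (t : Fin 2 → ZMod 2)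
    (X : Finset (Fin (n + 2))) :
    (∀ i ∈ X, Fin.append v t i = 0) ↔
      ((∀ i : Fin n, Fin.castAdd 2 i ∈ X → v i = 0) ∧
       (∀ j : Fin 2, Fin.natAdd n j ∈ X → t j = 0)) := by
  constructor
  · intro h
    refine ⟨fun i hi => ?_, fun j hj => ?_⟩
    · have := h _ hi; simpa [Fin.append_left] using this
    · have := h _ hj; simpa [Fin.append_right] using this
  · rintro ⟨h1, h2⟩ i
    refine Fin.addCases (motive := fun i => i ∈ X → Fin.append v t i = 0)
      (fun i hi => ?_) (fun j hj => ?_) i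
    · rw [Fin.append_left]; exact h1 i hi
    · rw [Fin.append_right]; exact h2 j hj

lemma card_piece {n : ℕ} (S : Finset (Fin n → ZMod 2)) (t : Fin 2 → ZMod 2)
    (X : Finset (Fin (n + 2))) :
    (((S.image (fun v => Fin.append v t)).filter (fun w => ∀ i ∈ X, w i = 0))).card =
      if (∀ j : Fin 2, Fin.natAdd n j ∈ X → t j = 0)
      then (S.filter (fun v => ∀ i : Fin n, Fin.castAdd 2 i ∈ X → v i = 0)).card else 0 := by
  rw [Finset.filter_image, Finset.card_image_of_injective _ (append_inj t)]
  by_cases hC : ∀ j : Fin 2, Fin.natAdd n j ∈ X → t j = 0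
  · rw [if_pos hC]
    congr 1
    apply Finset.filter_congr
    intro v _
    rw [split_cond]
    exact and_iff_left hC
  · rw [if_neg hC]
    rw [Finset.card_eq_zero, Finset.filter_eq_empty_iff]
    intro v _ hv
    exact hC ((split_cond v t X).mp hv).2

lemma disj_pieces {n : ℕ} {t s : Fin 2 → ZMod 2} (h : t ≠ s)
    (A B : Finset (Fin n → ZMod 2)) :
    Disjoint (A.image (fun v => Fin.append v t)) (B.image (fun v => Fin.append v s)) := by
  rw [Finset.disjoint_left]
  rintro w hw hw'
  simp only [Finset.mem_image] at hw hw'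
  obtain ⟨v, _, rfl⟩ := hw
  obtain ⟨u, _, he⟩ := hw'
  apply h
  funext j
  have := congrFun he (Fin.natAdd n j)
  simpa [Fin.append_right] using this.symm

lemma card_univ_filter {n : ℕ} (X : Finset (Fin n)) :
    ((univ : Finset (Fin n → ZMod 2)).filter (fun v => ∀ i ∈ X, v i = 0)).card
      = 2 ^ (Xᶜ.card) := by
  have e : {v : Fin n → ZMod 2 // ∀ i ∈ X, v i = 0} ≃ ({i : Fin n // i ∉ X} → ZMod 2) :=
    { toFun := fun v i => v.1 i.1
      invFun := fun f => ⟨fun i => if h : i ∈ X then 0 else f ⟨i, h⟩, fun i hi => by simp [hi]⟩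
      left_inv := by
        rintro ⟨v, hv⟩
        ext i
        by_cases h : i ∈ X <;> simp [h, hv i]
      right_inv := by
        intro f
        funext i
        simp [i.2] }
  have h1 : ((univ : Finset (Fin n → ZMod 2)).filter (fun v => ∀ i ∈ X, v i = 0)).card
      = Fintype.card {v : Fin n → ZMod 2 // ∀ i ∈ X, v i = 0} := by
    rw [Fintype.card_subtype]
  have h2 : (univ.filter (fun i : Fin n => i ∉ X)) = Xᶜ := by ext i; simp
  rw [h1, Fintype.card_congr e, Fintype.card_fun, ZMod.card, Fintype.card_subtype, h2]

lemma main_card {n : ℕ} (Q R : Finset (Fin n → ZMod 2)) (X : Finset (Fin (n + 2))) :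
    ((bulletComb Q R).filter (fun w => ∀ i ∈ X, w i = 0)).card =
      if Fin.natAdd n 0 ∈ X then
        (if Fin.natAdd n 1 ∈ X
         then ((Q ∩ R).filter (fun v => ∀ i : Fin n, Fin.castAdd 2 i ∈ X → v i = 0)).card
         else (Q.filter (fun v => ∀ i : Fin n, Fin.castAdd 2 i ∈ X → v i = 0)).card)
      else
        (if Fin.natAdd n 1 ∈ X
         then (R.filter (fun v => ∀ i : Fin n, Fin.castAdd 2 i ∈ X → v i = 0)).card
         else ((univ : Finset (Fin n → ZMod 2)).filter
           (fun v => ∀ i : Fin n, Fin.castAdd 2 i ∈ X → v i = 0)).card) := by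
  have key : ∀ (S : Finset (Fin n → ZMod 2)) (t : Fin 2 → ZMod 2),
      (((S.image (fun v => Fin.append v t)).filter (fun w => ∀ i ∈ X, w i = 0))).card =
        if (∀ j : Fin 2, Fin.natAdd n j ∈ X → t j = 0)
        then (S.filter (fun v => ∀ i : Fin n, Fin.castAdd 2 i ∈ X → v i = 0)).card else 0 :=
    fun S t => card_piece S t X
  have d1 : ∀ (A B : Finset (Fin n → ZMod 2)) (t s : Fin 2 → ZMod 2), t ≠ s →
      Disjoint ((A.image (fun v => Fin.append v t)).filter (fun w => ∀ i ∈ X, w i = 0))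
        ((B.image (fun v => Fin.append v s)).filter (fun w => ∀ i ∈ X, w i = 0)) :=
    fun A B t s h => Finset.disjoint_filter_filter (disj_pieces h A B)
  have hne1 : (![0,0] : Fin 2 → ZMod 2) ≠ ![0,1] := by
    intro h; have := congrFun h 1; simp at this
  have hne2 : (![0,0] : Fin 2 → ZMod 2) ≠ ![1,0] := by
    intro h; have := congrFun h 0; simp at this
  have hne3 : (![0,0] : Fin 2 → ZMod 2) ≠ ![1,1] := by
    intro h; have := congrFun h 0; simp at this
  have hne4 : (![0,1] : Fin 2 → ZMod 2) ≠ ![1,0] := by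
    intro h; have := congrFun h 0; simp at this
  have hne5 : (![0,1] : Fin 2 → ZMod 2) ≠ ![1,1] := by
    intro h; have := congrFun h 0; simp at this
  have hne6 : (![1,0] : Fin 2 → ZMod 2) ≠ ![1,1] := by
    intro h; have := congrFun h 1; simp at this
  have C00 : (∀ j : Fin 2, Fin.natAdd n j ∈ X → (![0,0] : Fin 2 → ZMod 2) j = 0) := by
    intro j _; fin_cases j <;> simp
  have C01 : (∀ j : Fin 2, Fin.natAdd n j ∈ X → (![0,1] : Fin 2 → ZMod 2) j = 0) ↔
      Fin.natAdd n 1 ∉ X := by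
    constructor
    · intro h hmem
      have := h 1 hmem; simp at this
    · intro h j hj
      fin_cases j
      · simp
      · exact absurd hj h
  have C10 : (∀ j : Fin 2, Fin.natAdd n j ∈ X → (![1,0] : Fin 2 → ZMod 2) j = 0) ↔
      Fin.natAdd n 0 ∉ X := by
    constructor
    · intro h hmem
      have := h 0 hmem; simp at this
    · intro h j hj
      fin_cases j
      · exact absurd hj h
      · simp
  have C11 : (∀ j : Fin 2, Fin.natAdd n j ∈ X → (![1,1] : Fin 2 → ZMod 2) j = 0) ↔
      (Fin.natAdd n 0 ∉ X ∧ Fin.natAdd n 1 ∉ X) := by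
    constructor
    · intro h
      constructor
      · intro hmem; have := h 0 hmem; simp at this
      · intro hmem; have := h 1 hmem; simp at this
    · rintro ⟨h0, h1⟩ j hj
      fin_cases j
      · exact absurd hj h0
      · exact absurd hj h1
  have D1 : Disjoint
      (((Q ∩ R).image (fun v => Fin.append v ![0,0])).filter (fun w => ∀ i ∈ X, w i = 0))
      (((Q \ R).image (fun v => Fin.append v ![0,1])).filter (fun w => ∀ i ∈ X, w i = 0)) :=
    d1 _ _ _ _ hne1
  have D2 : Disjoint
      ((((Q ∩ R).image (fun v => Fin.append v ![0,0])).filter (fun w => ∀ i ∈ X, w i = 0)) ∪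
       (((Q \ R).image (fun v => Fin.append v ![0,1])).filter (fun w => ∀ i ∈ X, w i = 0)))
      (((R \ Q).image (fun v => Fin.append v ![1,0])).filter (fun w => ∀ i ∈ X, w i = 0)) :=
    Finset.disjoint_union_left.mpr ⟨d1 _ _ _ _ hne2, d1 _ _ _ _ hne4⟩
  have D3 : Disjoint
      (((((Q ∩ R).image (fun v => Fin.append v ![0,0])).filter (fun w => ∀ i ∈ X, w i = 0)) ∪
        (((Q \ R).image (fun v => Fin.append v ![0,1])).filter (fun w => ∀ i ∈ X, w i = 0))) ∪
       (((R \ Q).image (fun v => Fin.append v ![1,0])).filter (fun w => ∀ i ∈ X, w i = 0)))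
      ((((Q ∪ R)ᶜ).image (fun v => Fin.append v ![1,1])).filter (fun w => ∀ i ∈ X, w i = 0)) :=
    Finset.disjoint_union_left.mpr
      ⟨Finset.disjoint_union_left.mpr ⟨d1 _ _ _ _ hne3, d1 _ _ _ _ hne5⟩, d1 _ _ _ _ hne6⟩
  rw [bulletComb, Finset.filter_union, Finset.filter_union, Finset.filter_union,
      Finset.card_union_of_disjoint D3, Finset.card_union_of_disjoint D2,
      Finset.card_union_of_disjoint D1, key, key, key, key]
  have dj : ∀ {A B : Finset (Fin n → ZMod 2)}, Disjoint A B →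
      Disjoint (A.filter (fun v => ∀ i : Fin n, Fin.castAdd 2 i ∈ X → v i = 0))
        (B.filter (fun v => ∀ i : Fin n, Fin.castAdd 2 i ∈ X → v i = 0)) :=
    fun h => Finset.disjoint_filter_filter h
  have d12 : Disjoint (Q ∩ R) (Q \ R) := by
    rw [Finset.disjoint_left]; intro a ha hb; simp_all
  have d13 : Disjoint (Q ∩ R) (R \ Q) := by
    rw [Finset.disjoint_left]; intro a ha hb; simp_all
  have d23 : Disjoint (Q \ R) (R \ Q) := by
    rw [Finset.disjoint_left]; intro a ha hb; simp_all
  have d14 : Disjoint (Q ∩ R) ((Q ∪ R)ᶜ) := by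
    rw [Finset.disjoint_left]; intro a ha hb; simp_all
  have d24 : Disjoint (Q \ R) ((Q ∪ R)ᶜ) := by
    rw [Finset.disjoint_left]; intro a ha hb; simp_all
  have d34 : Disjoint (R \ Q) ((Q ∪ R)ᶜ) := by
    rw [Finset.disjoint_left]; intro a ha hb; simp_all
  have hQsplit : ((Q ∩ R).filter (fun v => ∀ i : Fin n, Fin.castAdd 2 i ∈ X → v i = 0)).card
      + ((Q \ R).filter (fun v => ∀ i : Fin n, Fin.castAdd 2 i ∈ X → v i = 0)).card
      = (Q.filter (fun v => ∀ i : Fin n, Fin.castAdd 2 i ∈ X → v i = 0)).card := by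
    rw [← Finset.card_union_of_disjoint (dj d12), ← Finset.filter_union]
    congr 2
    ext x
    by_cases h : x ∈ R <;> simp [h]
  have hRsplit : ((Q ∩ R).filter (fun v => ∀ i : Fin n, Fin.castAdd 2 i ∈ X → v i = 0)).card
      + ((R \ Q).filter (fun v => ∀ i : Fin n, Fin.castAdd 2 i ∈ X → v i = 0)).card
      = (R.filter (fun v => ∀ i : Fin n, Fin.castAdd 2 i ∈ X → v i = 0)).card := by
    rw [← Finset.card_union_of_disjoint (dj d13), ← Finset.filter_union]
    congr 2
    ext x
    by_cases h : x ∈ Q <;> simp [h, and_comm]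
  have hUsplit : ((Q ∩ R).filter (fun v => ∀ i : Fin n, Fin.castAdd 2 i ∈ X → v i = 0)).card
      + ((Q \ R).filter (fun v => ∀ i : Fin n, Fin.castAdd 2 i ∈ X → v i = 0)).card
      + ((R \ Q).filter (fun v => ∀ i : Fin n, Fin.castAdd 2 i ∈ X → v i = 0)).card
      + (((Q ∪ R)ᶜ).filter (fun v => ∀ i : Fin n, Fin.castAdd 2 i ∈ X → v i = 0)).card
      = ((univ : Finset (Fin n → ZMod 2)).filter
          (fun v => ∀ i : Fin n, Fin.castAdd 2 i ∈ X → v i = 0)).card := by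
    rw [← Finset.card_union_of_disjoint (dj d12),
        ← Finset.card_union_of_disjoint
          (Finset.disjoint_union_left.mpr ⟨dj d13, dj d23⟩),
        ← Finset.card_union_of_disjoint
          (Finset.disjoint_union_left.mpr
            ⟨Finset.disjoint_union_left.mpr ⟨dj d14, dj d24⟩, dj d34⟩),
        ← Finset.filter_union, ← Finset.filter_union, ← Finset.filter_union]
    congr 2
    ext x
    by_cases h1 : x ∈ Q <;> by_cases h2 : x ∈ R <;> simp [h1, h2]
  by_cases h0 : Fin.natAdd n 0 ∈ X <;> by_cases h1 : Fin.natAdd n 1 ∈ X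
  · rw [if_pos C00, if_neg (fun hc => C01.mp hc h1), if_neg (fun hc => C10.mp hc h0),
        if_neg (fun hc => (C11.mp hc).1 h0), if_pos h0, if_pos h1]
    simp
  · rw [if_pos C00, if_pos (C01.mpr h1), if_neg (fun hc => C10.mp hc h0),
        if_neg (fun hc => (C11.mp hc).1 h0), if_pos h0, if_neg h1]
    simpa using hQsplit
  · rw [if_pos C00, if_neg (fun hc => C01.mp hc h1), if_pos (C10.mpr h0),
        if_neg (fun hc => (C11.mp hc).2 h1), if_neg h0, if_pos h1]
    simpa using hRsplit
  · rw [if_pos C00, if_pos (C01.mpr h1), if_pos (C10.mpr h0),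
        if_pos (C11.mpr ⟨h0, h1⟩), if_neg h0, if_neg h1]
    exact hUsplit

/-- `Q•R` is powerful if and only if `Q`, `R`, and `Q ∩ R` are all powerful. -/
theorem bulletComb_powerful_iff {n : ℕ} (Q R : Finset (Fin n → ZMod 2)) :
    IsPowerful (bulletComb Q R) ↔ IsPowerful Q ∧ IsPowerful R ∧ IsPowerful (Q ∩ R) := by
  classical
  constructor
  · intro h
    have castAdd_inj : Function.Injective (Fin.castAdd (n := n) 2) := by
      intro a b hab
      simpa [Fin.ext_iff] using hab
    have key : ∀ (E : Finset (Fin 2)) (X₀ : Finset (Fin n)),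
        ∀ i : Fin n, Fin.castAdd 2 i ∈ X₀.image (Fin.castAdd 2) ∪ E.image (Fin.natAdd n)
          ↔ i ∈ X₀ := by
      intro E X₀ i
      simp only [Finset.mem_union, Finset.mem_image]
      constructor
      · rintro (⟨a, ha, hae⟩ | ⟨j, _, hje⟩)
        · rwa [← castAdd_inj hae]
        · exact absurd hje.symm (castAdd_ne_natAdd i j)
      · intro hi
        exact Or.inl ⟨i, hi, rfl⟩
    have keyn : ∀ (E : Finset (Fin 2)) (X₀ : Finset (Fin n)) (j : Fin 2),
        Fin.natAdd n j ∈ X₀.image (Fin.castAdd 2) ∪ E.image (Fin.natAdd n) ↔ j ∈ E := by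
      intro E X₀ j
      simp only [Finset.mem_union, Finset.mem_image]
      constructor
      · rintro (⟨a, _, hae⟩ | ⟨k, hk, hke⟩)
        · exact absurd hae (castAdd_ne_natAdd a j)
        · have : k = j := by
            simpa [Fin.ext_iff] using hke
          rwa [← this]
      · intro hj
        exact Or.inr ⟨j, hj, rfl⟩
    refine ⟨fun X₀ => ?_, fun X₀ => ?_, fun X₀ => ?_⟩
    · -- Q : use E = {0}
      obtain ⟨d, hd⟩ := h (X₀.image (Fin.castAdd 2) ∪ ({0} : Finset (Fin 2)).image (Fin.natAdd n))
      refine ⟨d, ?_⟩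
      rw [main_card] at hd
      rw [if_pos ((keyn _ _ 0).mpr (by simp)), if_neg] at hd
      · rw [← hd]
        congr 1
        apply Finset.filter_congr
        intro v _
        constructor
        · intro hv i hi
          exact hv i ((key _ _ i).mp hi)
        · intro hv i hi
          exact hv i ((key _ _ i).mpr hi)
      · rw [keyn]
        simp
    · -- R : use E = {1}
      obtain ⟨d, hd⟩ := h (X₀.image (Fin.castAdd 2) ∪ ({1} : Finset (Fin 2)).image (Fin.natAdd n))
      refine ⟨d, ?_⟩
      rw [main_card] at hd
      rw [if_neg, if_pos ((keyn _ _ 1).mpr (by simp))] at hd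
      · rw [← hd]
        congr 1
        apply Finset.filter_congr
        intro v _
        constructor
        · intro hv i hi
          exact hv i ((key _ _ i).mp hi)
        · intro hv i hi
          exact hv i ((key _ _ i).mpr hi)
      · rw [keyn]
        simp
    · -- Q ∩ R : use E = univ
      obtain ⟨d, hd⟩ := h (X₀.image (Fin.castAdd 2) ∪ (univ : Finset (Fin 2)).image (Fin.natAdd n))
      refine ⟨d, ?_⟩
      rw [main_card] at hd
      rw [if_pos ((keyn _ _ 0).mpr (by simp)), if_pos ((keyn _ _ 1).mpr (by simp))] at hd
      rw [← hd]
      congr 1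
      apply Finset.filter_congr
      intro v _
      constructor
      · intro hv i hi
        exact hv i ((key _ _ i).mp hi)
      · intro hv i hi
        exact hv i ((key _ _ i).mpr hi)
  · rintro ⟨hQ, hR, hQR⟩ X
    rw [main_card]
    set X₀ : Finset (Fin n) := univ.filter (fun i => Fin.castAdd 2 i ∈ X) with hX₀
    have hpc : ∀ (S : Finset (Fin n → ZMod 2)),
        S.filter (fun v => ∀ i : Fin n, Fin.castAdd 2 i ∈ X → v i = 0)
          = S.filter (fun v => ∀ i ∈ X₀, v i = 0) := by
      intro S
      apply Finset.filter_congr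
      intro v _
      simp [hX₀]
    by_cases h0 : Fin.natAdd n 0 ∈ X <;> by_cases h1 : Fin.natAdd n 1 ∈ X
    · rw [if_pos h0, if_pos h1, hpc]
      exact hQR X₀
    · rw [if_pos h0, if_neg h1, hpc]
      exact hQ X₀
    · rw [if_neg h0, if_pos h1, hpc]
      exact hR X₀
    · rw [if_neg h0, if_neg h1, hpc, card_univ_filter]
      exact ⟨_, rfl⟩
end

section
/- If S₁, S₂ ⊆ 𝔽₂ⁿ are powerful sets, then S₁ ◇ S₂ := (S₁+∘) • (S₂+□) ⊆ 𝔽₂^{n+3} is a powerful set. -/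
/-- The loop extension `T+∘ ⊆ 𝔽₂^{n+1}`: append a new last coordinate `0` to every vector
of `T`. -/
def loopExt {n : ℕ} (T : Finset (Fin n → ZMod 2)) : Finset (Fin (n + 1) → ZMod 2) :=
  T.image (fun v => Fin.snoc v 0)

/-- The framing `T+□ ⊆ 𝔽₂^{n+1}`: the zero vector of length `n+1` together with every
nonzero vector of `T` extended by a new last coordinate equal to `1`. -/
def framing {n : ℕ} (T : Finset (Fin n → ZMod 2)) : Finset (Fin (n + 1) → ZMod 2) :=
  insert 0 ((T.filter (fun v => v ≠ 0)).image (fun v => Fin.snoc v 1))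

section Aux

lemma append_pair {α : Type*} {m : ℕ} (v : Fin m → α) (c d : α) :
    Fin.append v ![c, d] = (Fin.snoc (Fin.snoc v c) d : Fin (m + 1 + 1) → α) := by
  have h : ![c, d] = Fin.snoc ![c] d := by
    funext i; fin_cases i <;> simp [Fin.snoc]
  rw [h, Fin.append_snoc, Fin.append_right_eq_snoc]
  simp

lemma snoc_injective' {α : Type*} {m : ℕ} (c : α) :
    Function.Injective (fun v : Fin m → α => (Fin.snoc v c : Fin (m + 1) → α)) := by
  intro v w h
  funext i
  have := congrFun h i.castSucc
  simpa using this

lemma powerful_zero_mem {n : ℕ} {S : Finset (Fin n → ZMod 2)} (h : IsPowerful S) :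
    (0 : Fin n → ZMod 2) ∈ S := by
  classical
  obtain ⟨d, hd⟩ := h Finset.univ
  have hpos : 0 < (S.filter (fun v => ∀ i ∈ Finset.univ, v i = 0)).card := by
    rw [hd]; exact Nat.pow_pos (by norm_num)
  obtain ⟨v, hv⟩ := Finset.card_pos.mp hpos
  rw [Finset.mem_filter] at hv
  have : v = 0 := funext fun i => hv.2 i (Finset.mem_univ i)
  exact this ▸ hv.1

lemma snoc_zero_zero {n : ℕ} :
    (Fin.snoc (0 : Fin n → ZMod 2) (0 : ZMod 2) : Fin (n + 1) → ZMod 2) = 0 := by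
  funext i
  induction i using Fin.lastCases with
  | last => simp
  | cast k => simp

lemma PA_snoc_iff {n : ℕ} (q : Fin (n + 1) → Prop) (u : Fin n → ZMod 2) (c : ZMod 2) :
    (∀ j : Fin (n + 1), q j → (Fin.snoc u c : Fin (n + 1) → ZMod 2) j = 0) ↔
      ((q (Fin.last n) → c = 0) ∧ ∀ k : Fin n, q k.castSucc → u k = 0) := by
  constructor
  · intro h
    exact ⟨fun hq => by simpa using h _ hq, fun k hk => by simpa using h _ hk⟩
  · rintro ⟨hc, hu⟩ j hj
    induction j using Fin.lastCases with
    | last => simpa using hc hj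
    | cast k => simpa using hu k hj

lemma snoc2_zero_iff {n : ℕ} (X : Finset (Fin (n + 1 + 1))) (v : Fin n → ZMod 2)
    (c d : ZMod 2) :
    (∀ i ∈ X, (Fin.snoc (Fin.snoc v c) d : Fin (n + 1 + 1) → ZMod 2) i = 0) ↔
      ((∀ j : Fin n, j.castSucc.castSucc ∈ X → v j = 0) ∧
        ((Fin.last n).castSucc ∈ X → c = 0) ∧ (Fin.last (n + 1) ∈ X → d = 0)) := by
  constructor
  · intro h
    have h1 := (PA_snoc_iff (fun i => i ∈ X) (Fin.snoc v c) d).mp (fun j hj => h j hj)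
    have h2 := (PA_snoc_iff (fun k => k.castSucc ∈ X) v c).mp h1.2
    exact ⟨h2.2, h2.1, h1.1⟩
  · rintro ⟨hv, hc, hd⟩
    exact fun j hj => (PA_snoc_iff (fun i => i ∈ X) (Fin.snoc v c) d).mpr
      ⟨hd, (PA_snoc_iff (fun k => k.castSucc ∈ X) v c).mpr ⟨hc, hv⟩⟩ j hj

lemma card_filter_univ_pow {m : ℕ} (q : Fin m → Prop) [DecidablePred q] :
    ∃ d, (Finset.univ.filter (fun v : Fin m → ZMod 2 => ∀ j, q j → v j = 0)).card = 2 ^ d := by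
  classical
  refine ⟨(Finset.univ.filter (fun j => ¬ q j)).card, ?_⟩
  have he : Finset.univ.filter (fun v : Fin m → ZMod 2 => ∀ j, q j → v j = 0)
      = Fintype.piFinset (fun j => if q j then ({0} : Finset (ZMod 2)) else Finset.univ) := by
    ext v
    simp only [Finset.mem_filter, Finset.mem_univ, true_and, Fintype.mem_piFinset]
    refine forall_congr' fun j => ?_
    by_cases h : q j <;> simp [h]
  rw [he, Fintype.card_piFinset]
  have : ∀ j, (if q j then ({0} : Finset (ZMod 2)) else Finset.univ).card
      = if q j then 1 else 2 := by
    intro j; by_cases h : q j <;> simp [h]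
  rw [Finset.prod_congr rfl (fun j _ => this j), Finset.prod_ite, Finset.prod_const_one,
    Finset.prod_const, one_mul]

lemma bulletComb_eq_image {m : ℕ} (Q R : Finset (Fin m → ZMod 2)) :
    bulletComb Q R = Finset.univ.image
      (fun v => Fin.append v
        ![if v ∈ Q then (0 : ZMod 2) else 1, if v ∈ R then (0 : ZMod 2) else 1]) := by
  classical
  ext w
  simp only [bulletComb, Finset.mem_union, Finset.mem_image, Finset.mem_inter,
    Finset.mem_sdiff, Finset.mem_compl, Finset.mem_univ, true_and, not_or]
  constructor
  · rintro (((⟨v, ⟨hq, hr⟩, rfl⟩ | ⟨v, ⟨hq, hr⟩, rfl⟩) | ⟨v, ⟨hr, hq⟩, rfl⟩) |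
      ⟨v, ⟨hq, hr⟩, rfl⟩) <;> exact ⟨v, by simp [hq, hr]⟩
  · rintro ⟨v, rfl⟩
    by_cases hq : v ∈ Q <;> by_cases hr : v ∈ R
    · exact Or.inl (Or.inl (Or.inl ⟨v, ⟨hq, hr⟩, by simp [hq, hr]⟩))
    · exact Or.inl (Or.inl (Or.inr ⟨v, ⟨hq, hr⟩, by simp [hq, hr]⟩))
    · exact Or.inl (Or.inr ⟨v, ⟨hr, hq⟩, by simp [hq, hr]⟩)
    · exact Or.inr ⟨v, ⟨hq, hr⟩, by simp [hq, hr]⟩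

lemma append_bits_injective {m : ℕ} (f g : (Fin m → ZMod 2) → ZMod 2) :
    Function.Injective (fun v : Fin m → ZMod 2 => Fin.append v ![f v, g v]) := by
  intro v w h
  funext i
  have := congrFun h (Fin.castAdd 2 i)
  simpa [Fin.append_left] using this

end Aux

/-- If `S₁, S₂ ⊆ 𝔽₂ⁿ` are powerful, then `S₁ ◇ S₂ = (S₁+∘) • (S₂+□)` is powerful. -/
theorem diamond_powerful {n : ℕ} (S₁ S₂ : Finset (Fin n → ZMod 2))
    (h₁ : IsPowerful S₁) (h₂ : IsPowerful S₂) :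
    IsPowerful (bulletComb (loopExt S₁) (framing S₂)) := by
  classical
  intro X
  have h0₁ : (0 : Fin n → ZMod 2) ∈ S₁ := powerful_zero_mem h₁
  have h0₂ : (0 : Fin n → ZMod 2) ∈ S₂ := powerful_zero_mem h₂
  rw [bulletComb_eq_image, Finset.filter_image,
    Finset.card_image_of_injective _ (append_bits_injective _ _)]
  have key : ∀ v : Fin (n + 1) → ZMod 2,
      ((∀ i ∈ X, Fin.append v
          ![if v ∈ loopExt S₁ then (0 : ZMod 2) else 1,
            if v ∈ framing S₂ then (0 : ZMod 2) else 1] i = 0)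
        ↔ ((∀ j : Fin (n + 1), j.castSucc.castSucc ∈ X → v j = 0) ∧
            ((Fin.last (n + 1)).castSucc ∈ X → v ∈ loopExt S₁) ∧
            (Fin.last (n + 1 + 1) ∈ X → v ∈ framing S₂))) := by
    intro v
    rw [append_pair, snoc2_zero_iff]
    have e1 : ((if v ∈ loopExt S₁ then (0 : ZMod 2) else 1) = 0) ↔ v ∈ loopExt S₁ := by
      by_cases h : v ∈ loopExt S₁ <;> simp [h]
    have e2 : ((if v ∈ framing S₂ then (0 : ZMod 2) else 1) = 0) ↔ v ∈ framing S₂ := by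
      by_cases h : v ∈ framing S₂ <;> simp [h]
    rw [e1, e2]
  rw [Finset.filter_congr (fun v _ => key v)]
  by_cases hA : (Fin.last (n + 1)).castSucc ∈ X <;> by_cases hB : Fin.last (n + 1 + 1) ∈ X
  · -- both extra coordinates in X : the filter is {0}
    have heq : Finset.univ.filter (fun v : Fin (n + 1) → ZMod 2 =>
        (∀ j : Fin (n + 1), j.castSucc.castSucc ∈ X → v j = 0) ∧
          ((Fin.last (n + 1)).castSucc ∈ X → v ∈ loopExt S₁) ∧
          (Fin.last (n + 1 + 1) ∈ X → v ∈ framing S₂)) = {0} := by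
      ext v
      simp only [Finset.mem_filter, Finset.mem_univ, true_and, Finset.mem_singleton]
      constructor
      · rintro ⟨hPA, hQv, hRv⟩
        obtain ⟨u, hu, rfl⟩ := Finset.mem_image.mp (hQv hA)
        rcases Finset.mem_insert.mp (hRv hB) with h0 | hM
        · exact h0
        · obtain ⟨w, hw, hweq⟩ := Finset.mem_image.mp hM
          have := congrFun hweq (Fin.last n)
          simp at this
      · rintro rfl
        exact ⟨fun j _ => rfl,
          fun _ => Finset.mem_image.mpr ⟨0, h0₁, snoc_zero_zero⟩,
          fun _ => Finset.mem_insert_self _ _⟩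
    rw [heq]
    exact ⟨0, by simp⟩
  · -- only the first extra coordinate in X : count is |Q ∩ A|
    have heq : Finset.univ.filter (fun v : Fin (n + 1) → ZMod 2 =>
        (∀ j : Fin (n + 1), j.castSucc.castSucc ∈ X → v j = 0) ∧
          ((Fin.last (n + 1)).castSucc ∈ X → v ∈ loopExt S₁) ∧
          (Fin.last (n + 1 + 1) ∈ X → v ∈ framing S₂)) =
        (loopExt S₁).filter (fun v =>
          ∀ j : Fin (n + 1), j.castSucc.castSucc ∈ X → v j = 0) := by
      ext v
      simp only [Finset.mem_filter, Finset.mem_univ, true_and, hA, hB]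
      tauto
    rw [heq]
    unfold loopExt
    rw [Finset.filter_image, Finset.card_image_of_injective _ (snoc_injective' _)]
    have heq2 : S₁.filter (fun v => ∀ j : Fin (n + 1), j.castSucc.castSucc ∈ X →
        (Fin.snoc v 0 : Fin (n + 1) → ZMod 2) j = 0) =
        S₁.filter (fun v => ∀ k ∈ Finset.univ.filter
          (fun k : Fin n => k.castSucc.castSucc.castSucc ∈ X), v k = 0) := by
      apply Finset.filter_congr
      intro v _
      rw [PA_snoc_iff (fun j => j.castSucc.castSucc ∈ X) v 0]
      simp
    rw [heq2]
    exact h₁ _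
  · -- only the second extra coordinate in X : count is |R ∩ A|
    have heq : Finset.univ.filter (fun v : Fin (n + 1) → ZMod 2 =>
        (∀ j : Fin (n + 1), j.castSucc.castSucc ∈ X → v j = 0) ∧
          ((Fin.last (n + 1)).castSucc ∈ X → v ∈ loopExt S₁) ∧
          (Fin.last (n + 1 + 1) ∈ X → v ∈ framing S₂)) =
        (framing S₂).filter (fun v =>
          ∀ j : Fin (n + 1), j.castSucc.castSucc ∈ X → v j = 0) := by
      ext v
      simp only [Finset.mem_filter, Finset.mem_univ, true_and, hA, hB]
      tauto
    rw [heq]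
    unfold framing
    rw [Finset.filter_insert]
    have hPA0 : ∀ j : Fin (n + 1), j.castSucc.castSucc ∈ X →
        (0 : Fin (n + 1) → ZMod 2) j = 0 := by intro j _; simp
    rw [if_pos hPA0]
    have h0M : (0 : Fin (n + 1) → ZMod 2) ∉
        ((S₂.filter (fun v => v ≠ 0)).image (fun v => (Fin.snoc v 1 : Fin (n + 1) → ZMod 2))).filter
          (fun v => ∀ j : Fin (n + 1), j.castSucc.castSucc ∈ X → v j = 0) := by
      intro hmem
      obtain ⟨hmem', -⟩ := Finset.mem_filter.mp hmem
      obtain ⟨w, hw, hweq⟩ := Finset.mem_image.mp hmem'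
      have := congrFun hweq (Fin.last n)
      simp at this
    rw [Finset.card_insert_of_notMem h0M, Finset.filter_image,
      Finset.card_image_of_injective _ (snoc_injective' _), Finset.filter_filter]
    by_cases hL : (Fin.last n).castSucc.castSucc ∈ X
    · have hempty : S₂.filter (fun v => v ≠ 0 ∧ ∀ j : Fin (n + 1), j.castSucc.castSucc ∈ X →
          (Fin.snoc v 1 : Fin (n + 1) → ZMod 2) j = 0) = ∅ := by
        rw [Finset.filter_eq_empty_iff]
        rintro v _ ⟨hv0, hcond⟩
        exact one_ne_zero
          (((PA_snoc_iff (fun j => j.castSucc.castSucc ∈ X) v 1).mp hcond).1 hL)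
      rw [hempty]
      exact ⟨0, by simp⟩
    · obtain ⟨d, hd⟩ := h₂ (Finset.univ.filter
        (fun k : Fin n => k.castSucc.castSucc.castSucc ∈ X))
      have heq3 : S₂.filter (fun v => v ≠ 0 ∧ ∀ j : Fin (n + 1), j.castSucc.castSucc ∈ X →
          (Fin.snoc v 1 : Fin (n + 1) → ZMod 2) j = 0) =
          (S₂.filter (fun v => ∀ k ∈ Finset.univ.filter
            (fun k : Fin n => k.castSucc.castSucc.castSucc ∈ X), v k = 0)).erase 0 := by
        ext v
        simp only [Finset.mem_filter, Finset.mem_erase, Finset.mem_univ, true_and]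
        rw [PA_snoc_iff (fun j => j.castSucc.castSucc ∈ X) v 1]
        simp [hL]
        tauto
      rw [heq3, Finset.card_erase_of_mem (Finset.mem_filter.mpr ⟨h0₂, fun k _ => rfl⟩), hd]
      exact ⟨d, Nat.sub_add_cancel Nat.one_le_two_pow⟩
  · -- neither extra coordinate in X
    have heq : Finset.univ.filter (fun v : Fin (n + 1) → ZMod 2 =>
        (∀ j : Fin (n + 1), j.castSucc.castSucc ∈ X → v j = 0) ∧
          ((Fin.last (n + 1)).castSucc ∈ X → v ∈ loopExt S₁) ∧
          (Fin.last (n + 1 + 1) ∈ X → v ∈ framing S₂)) =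
        Finset.univ.filter (fun v : Fin (n + 1) → ZMod 2 =>
          ∀ j : Fin (n + 1), j.castSucc.castSucc ∈ X → v j = 0) := by
      apply Finset.filter_congr
      intro v _
      simp [hA, hB]
    rw [heq]
    exact card_filter_univ_pow _
end
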